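/- Fix constants k ≥ 1 and s ≥ k. For k ≤ t ≤ 2k−2, define a_t = ∑_{i=t−k+1}^{k−1} C(s−1,i)·C(s−1,t−i) and b_t = C(2s−2,t). Then (2k−1−t)/(t+1) ≤ a_t/b_t ≤ 1. -/

import Mathlib

open Finset

-- ratio lemma
lemma L1 (n a b : ℕ) (hab : a ≤ b) :
    n.choose a * n.choose (b+1) ≤ n.choose (a+1) * n.choose b := by
  have h1 : n.choose (a+1) * (a+1) = n.choose a * (n - a) := Nat.choose_succ_right_eq n a
  have h2 : n.choose (b+1) * (b+1) = n.choose b * (n - b) := Nat.choose_succ_right_eq n b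
  have key : (n - b) * (a+1) ≤ (n - a) * (b+1) :=
    Nat.mul_le_mul (Nat.sub_le_sub_left hab n) (by omega)
  have := Nat.mul_le_mul_left (n.choose a * n.choose b) key
  have h3 : n.choose a * n.choose (b+1) * ((a+1)*(b+1)) ≤
      n.choose (a+1) * n.choose b * ((a+1)*(b+1)) := by
    calc n.choose a * n.choose (b+1) * ((a+1)*(b+1))
        = n.choose a * (n.choose (b+1) * (b+1)) * (a+1) := by ring
      _ = n.choose a * n.choose b * ((n-b)*(a+1)) := by rw [h2]; ring
      _ ≤ n.choose a * n.choose b * ((n-a)*(b+1)) := this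
      _ = (n.choose (a+1) * (a+1)) * n.choose b * (b+1) := by rw [h1]; ring
      _ = n.choose (a+1) * n.choose b * ((a+1)*(b+1)) := by ring
  exact Nat.le_of_mul_le_mul_right h3 (by positivity)

lemma Lmono (n t : ℕ) : ∀ d i, 2*(i+d) ≤ t →
    n.choose i * n.choose (t-i) ≤ n.choose (i+d) * n.choose (t-(i+d)) := by
  intro d
  induction d with
  | zero => intro i _; simp
  | succ d ih =>
    intro i h
    have h1 : 2*(i+d) ≤ t := by omega
    refine (ih i h1).trans ?_
    have hab : i + d ≤ t - (i+d+1) := by omega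
    have := L1 n (i+d) (t-(i+d+1)) hab
    have he : t - (i+d+1) + 1 = t - (i+d) := by omega
    rw [he] at this
    have he2 : i + (d+1) = i + d + 1 := by omega
    rw [he2]
    exact this

lemma Lsym (n t i : ℕ) (h : i ≤ t) :
    n.choose i * n.choose (t-i) = n.choose (t-i) * n.choose (t-(t-i)) := by
  rw [Nat.sub_sub_self h, mul_comm]

-- general comparison: any i ≤ t vs any j with 2j ≤ t and min side ≥
lemma Lcomp (n t i j : ℕ) (hit : i ≤ t) (hj2 : 2*j ≤ t)
    (hij : min i (t - i) ≤ j) :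
    n.choose i * n.choose (t-i) ≤ n.choose j * n.choose (t-j) := by
  rcases le_or_gt i (t - i) with h | h
  · have : min i (t-i) = i := min_eq_left h
    rw [this] at hij
    have := Lmono n t (j - i) i (by omega)
    rwa [show i + (j - i) = j by omega] at this
  · have hm : min i (t-i) = t - i := min_eq_right (le_of_lt h)
    rw [hm] at hij
    rw [Lsym n t i hit]
    have := Lmono n t (j - (t-i)) (t-i) (by omega)
    rwa [show t - i + (j - (t-i)) = j by omega] at this

lemma vander (n t : ℕ) : (n + n).choose t =
    ∑ i ∈ Finset.range (t+1), n.choose i * n.choose (t-i) := by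
  rw [Nat.add_choose_eq]
  rw [Finset.Nat.sum_antidiagonal_eq_sum_range_succ_mk]

lemma Lcomp2 (n t i j : ℕ) (hit : i ≤ t) (hjt : j ≤ t)
    (hij : min i (t - i) ≤ min j (t - j)) :
    n.choose i * n.choose (t-i) ≤ n.choose j * n.choose (t-j) := by
  rcases le_or_gt j (t - j) with h | h
  · have hm : min j (t-j) = j := min_eq_left h
    rw [hm] at hij
    exact Lcomp n t i j hit (by omega) hij
  · have hm : min j (t-j) = t - j := min_eq_right (le_of_lt h)
    rw [hm] at hij
    rw [Lsym n t j hjt]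
    exact Lcomp n t i (t-j) hit (by omega) hij

lemma main_nat (k t n : ℕ) (hk : 1 ≤ k) (htk : k ≤ t) (ht : t ≤ 2*k - 2) :
    (2*k - 1 - t) * ((n+n).choose t) ≤
      (t+1) * ∑ i ∈ Finset.Icc (t-k+1) (k-1), n.choose i * n.choose (t-i) ∧
    ∑ i ∈ Finset.Icc (t-k+1) (k-1), n.choose i * n.choose (t-i) ≤ (n+n).choose t := by
  set f : ℕ → ℕ := fun i => n.choose i * n.choose (t-i) with hf
  set S : Finset ℕ := Finset.Icc (t-k+1) (k-1) with hS
  set T : Finset ℕ := Finset.range (t+1) with hT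
  have hST : S ⊆ T := by
    intro x hx
    simp only [hS, Finset.mem_Icc] at hx
    simp only [hT, Finset.mem_range]
    omega
  have hB : (n+n).choose t = ∑ i ∈ T, f i := vander n t
  set m : ℕ := 2*k - 1 - t with hm
  have hcardS : S.card = m := by rw [hS, Nat.card_Icc]; omega
  have hcardT : T.card = t + 1 := by rw [hT, Finset.card_range]
  set c : ℕ := f (k-1) with hc
  -- every element of S has term ≥ c
  have hin : ∀ j ∈ S, c ≤ f j := by
    intro j hj
    simp only [hS, Finset.mem_Icc] at hj
    exact Lcomp2 n t (k-1) j (by omega) (by omega) (by omega)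
  -- every element of T \ S has term ≤ c
  have hout : ∀ i ∈ T \ S, f i ≤ c := by
    intro i hi
    simp only [hT, hS, Finset.mem_sdiff, Finset.mem_range, Finset.mem_Icc] at hi
    exact Lcomp2 n t i (k-1) (by omega) (by omega) (by omega)
  have e1 : ∑ i ∈ T \ S, f i ≤ (t + 1 - m) * c := by
    have := Finset.sum_le_card_nsmul (T \ S) f c hout
    have hcd : (T \ S).card = t + 1 - m := by
      rw [Finset.card_sdiff_of_subset hST, hcardS, hcardT]
    rwa [hcd, smul_eq_mul] at this
  have e2 : m * c ≤ ∑ i ∈ S, f i := by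
    have := Finset.card_nsmul_le_sum S f c hin
    rwa [hcardS, smul_eq_mul] at this
  have hsd : ∑ i ∈ T \ S, f i + ∑ i ∈ S, f i = ∑ i ∈ T, f i :=
    Finset.sum_sdiff hST
  constructor
  · have hmle : m ≤ t + 1 := by omega
    calc m * ((n+n).choose t) = m * (∑ i ∈ T \ S, f i) + m * (∑ i ∈ S, f i) := by
          rw [hB, ← hsd]; ring
      _ ≤ m * ((t+1-m)*c) + m * (∑ i ∈ S, f i) :=
          Nat.add_le_add_right (Nat.mul_le_mul_left m e1) _
      _ = (t+1-m) * (m*c) + m * (∑ i ∈ S, f i) := by ring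
      _ ≤ (t+1-m) * (∑ i ∈ S, f i) + m * (∑ i ∈ S, f i) :=
          Nat.add_le_add_right (Nat.mul_le_mul_left _ e2) _
      _ = ((t+1-m) + m) * (∑ i ∈ S, f i) := by ring
      _ = (t+1) * (∑ i ∈ S, f i) := by rw [show (t+1-m)+m = t+1 by omega]
  · rw [hB]
    exact Finset.sum_le_sum_of_subset hST

/-- for `k ≤ t ≤ 2k−2`, with `a_t = ∑_{i=t−k+1}^{k−1} C(s−1,i)C(s−1,t−i)`
and `b_t = C(2s−2,t)`, one has `(2k−1−t)/(t+1) ≤ a_t/b_t ≤ 1`. -/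
theorem a_t_over_b_t_bounds (k s t : ℕ) (hk : 1 ≤ k) (hks : k ≤ s)
    (htk : k ≤ t) (ht : t ≤ 2 * k - 2) :
    ((2 * k - 1 - t : ℕ) : ℝ) / ((t : ℝ) + 1) ≤
      (∑ i ∈ Finset.Icc (t - k + 1) (k - 1),
        ((s - 1).choose i : ℝ) * ((s - 1).choose (t - i) : ℝ)) / ((2 * s - 2).choose t : ℝ) ∧
    (∑ i ∈ Finset.Icc (t - k + 1) (k - 1),
        ((s - 1).choose i : ℝ) * ((s - 1).choose (t - i) : ℝ)) / ((2 * s - 2).choose t : ℝ)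
      ≤ 1 := by
  set n : ℕ := s - 1 with hn
  have h2s : 2 * s - 2 = n + n := by omega
  obtain ⟨hlow, hup⟩ := main_nat k t n hk htk ht
  have hBpos : 0 < (n + n).choose t := Nat.choose_pos (by omega)
  rw [h2s]
  set A : ℕ := ∑ i ∈ Finset.Icc (t-k+1) (k-1), n.choose i * n.choose (t-i) with hA
  have hcast : (∑ i ∈ Finset.Icc (t - k + 1) (k - 1),
      (n.choose i : ℝ) * (n.choose (t - i) : ℝ)) = (A : ℝ) := by
    rw [hA]; push_cast; ring
  rw [hcast]
  have hBpos' : (0:ℝ) < ((n+n).choose t : ℝ) := by exact_mod_cast hBpos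
  constructor
  · rw [div_le_div_iff₀ (by positivity) hBpos']
    have : ((2*k - 1 - t) * ((n+n).choose t) : ℕ) ≤ ((t+1) * A : ℕ) := hlow
    have hc : ((2*k - 1 - t : ℕ):ℝ) * ((n+n).choose t : ℝ) ≤ ((t:ℝ)+1) * (A:ℝ) := by
      exact_mod_cast this
    linarith
  · rw [div_le_one hBpos']
    exact_mod_cast hup
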